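/- arXiv:2510.14410 — 2 statements merged into one kernel-verified Lean document; each statement's English description precedes it below -/
import Mathlib

section
/- Let d ≥ 1 and let g be a nonnegative Schwartz function on ℝ. If ∫_ℝ g(x)^{m₀} e^{|x|} dx < ∞ for some real m₀ ≥ 2, then sup_{x ∈ ℝ} g(x)^{m₀+1} e^{|x|} < ∞. -/
open MeasureTheory Real

/-- If `g` is a nonnegative Schwartz function on `ℝ` and `∫ g^{m₀} e^{|x|} dx < ∞`
for some real `m₀ ≥ 2`, then `g^{m₀+1} e^{|x|}` is bounded on `ℝ`. -/
theorem stmt1 (g : SchwartzMap ℝ ℝ) (hg : ∀ x, 0 ≤ g x) (m₀ : ℝ) (hm₀ : 2 ≤ m₀)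
    (hint : Integrable (fun x : ℝ => (g x) ^ m₀ * Real.exp |x|)) :
    ∃ C : ℝ, ∀ x : ℝ, (g x) ^ (m₀ + 1) * Real.exp |x| ≤ C := by
  -- bounds on g and its derivative
  obtain ⟨B₁, hB₁⟩ := g.decay 0 0
  obtain ⟨B₂, hB₂⟩ := (SchwartzMap.derivCLM ℝ ℝ g).decay 0 0
  simp only [norm_iteratedFDeriv_zero, pow_zero, one_mul] at hB₁ hB₂
  have hB₁' : ∀ x, |g x| ≤ B₁ := fun x => by simpa using hB₁.2 x
  have hB₂' : ∀ x, |deriv (⇑g) x| ≤ B₂ := by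
    intro x
    have := hB₂.2 x
    rw [SchwartzMap.derivCLM_apply] at this
    simpa using this
  have hB₁0 : 0 ≤ B₁ := le_trans (abs_nonneg _) (hB₁' 0)
  have hB₂0 : 0 ≤ B₂ := le_trans (abs_nonneg _) (hB₂' 0)
  set f : ℝ → ℝ := fun x => (g x) ^ m₀ * Real.exp |x| with hf
  have hf_nonneg : ∀ x, 0 ≤ f x :=
    fun x => mul_nonneg (Real.rpow_nonneg (hg x) _) (Real.exp_pos _).le
  set I : ℝ := ∫ x, f x with hI
  have hI0 : 0 ≤ I := integral_nonneg hf_nonneg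
  set C : ℝ := (m₀ + 1) * B₂ + B₁ with hC
  have hC0 : 0 ≤ C := by positivity
  -- continuity facts
  have hcont_gm : Continuous fun x => (g x) ^ m₀ :=
    g.continuous.rpow_const fun x => Or.inr (by linarith)
  have hcont_g' : Continuous (deriv (⇑g)) := by
    have : (deriv (⇑g)) = ⇑(SchwartzMap.derivCLM ℝ ℝ g) := by
      funext x; rw [SchwartzMap.derivCLM_apply]
    rw [this]; exact (SchwartzMap.derivCLM ℝ ℝ g).continuous
  -- derivative of x ↦ g x ^ (m₀+1)
  have hDgp : ∀ x : ℝ, HasDerivAt (fun y => (g y) ^ (m₀ + 1))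
      (deriv (⇑g) x * (m₀ + 1) * (g x) ^ m₀) x := by
    intro x
    have h1 : HasDerivAt (⇑g) (deriv (⇑g) x) x := g.differentiableAt.hasDerivAt
    have := h1.rpow_const (p := m₀ + 1) (Or.inr (by linarith))
    simpa using this
  -- value at 0
  have hval0 : (g 0) ^ (m₀ + 1) * Real.exp |(0:ℝ)| = (g 0) ^ (m₀ + 1) := by simp
  -- pointwise bound used on both sides
  have hkey : ∀ t : ℝ, |deriv (⇑g) t * (m₀ + 1) * (g t) ^ m₀| + (g t) ^ (m₀ + 1)
      ≤ C * ((g t) ^ m₀) := by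
    intro t
    have h1 : |deriv (⇑g) t * (m₀ + 1) * (g t) ^ m₀|
        ≤ B₂ * (m₀ + 1) * (g t) ^ m₀ := by
      rw [abs_mul, abs_mul]
      gcongr
      · exact hB₂' t
      · rw [abs_of_nonneg (by linarith : (0:ℝ) ≤ m₀ + 1)]
      · rw [abs_of_nonneg (Real.rpow_nonneg (hg t) _)]
    have h2 : (g t) ^ (m₀ + 1) ≤ B₁ * (g t) ^ m₀ := by
      rw [Real.rpow_add_of_nonneg (hg t) (by linarith) zero_le_one, Real.rpow_one,
        mul_comm]
      exact mul_le_mul_of_nonneg_right (le_trans (le_abs_self _) (hB₁' t))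
        (Real.rpow_nonneg (hg t) _)
    calc |deriv (⇑g) t * (m₀ + 1) * (g t) ^ m₀| + (g t) ^ (m₀ + 1)
        ≤ B₂ * (m₀ + 1) * (g t) ^ m₀ + B₁ * (g t) ^ m₀ := add_le_add h1 h2
      _ = C * ((g t) ^ m₀) := by rw [hC]; ring
  -- integral of f over an interval is bounded by I
  have hIocI : ∀ (s : Set ℝ), MeasurableSet s → ∫ t in s, f t ≤ I := by
    intro s hs
    exact setIntegral_le_integral hint (Filter.Eventually.of_forall hf_nonneg)
  refine ⟨(g 0) ^ (m₀ + 1) + C * I, fun x => ?_⟩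
  rcases le_or_gt 0 x with hx | hx
  · -- positive side: h t = g t ^ (m₀+1) * exp t
    set h : ℝ → ℝ := fun t => (g t) ^ (m₀ + 1) * Real.exp t with hh
    set h' : ℝ → ℝ := fun t =>
      deriv (⇑g) t * (m₀ + 1) * (g t) ^ m₀ * Real.exp t
        + (g t) ^ (m₀ + 1) * Real.exp t with hh'
    have hD : ∀ t ∈ Set.uIcc 0 x, HasDerivAt h (h' t) t := by
      intro t _
      have := (hDgp t).mul (Real.hasDerivAt_exp t)
      simpa [hh, hh', Pi.mul_def] using this
    have hcont_h' : Continuous h' := by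
      apply Continuous.add
      · exact ((hcont_g'.mul continuous_const).mul hcont_gm).mul Real.continuous_exp
      · exact (g.continuous.rpow_const fun y => Or.inr (by linarith)).mul
          Real.continuous_exp
    have hInt : IntervalIntegrable h' volume 0 x :=
      hcont_h'.intervalIntegrable 0 x
    have hFTC : ∫ t in (0:ℝ)..x, h' t = h x - h 0 :=
      intervalIntegral.integral_eq_sub_of_hasDerivAt hD hInt
    have hIntf : IntervalIntegrable (fun t => C * f t) volume 0 x :=
      (hint.const_mul C).intervalIntegrable
    have hmono : ∫ t in (0:ℝ)..x, h' t ≤ ∫ t in (0:ℝ)..x, C * f t := by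
      apply intervalIntegral.integral_mono_on hx hInt hIntf
      intro t ht
      have ht0 : 0 ≤ t := ht.1
      have habs : |t| = t := abs_of_nonneg ht0
      have hexp : (0:ℝ) < Real.exp t := Real.exp_pos t
      calc h' t = (deriv (⇑g) t * (m₀ + 1) * (g t) ^ m₀ + (g t) ^ (m₀ + 1))
            * Real.exp t := by rw [hh']; ring
        _ ≤ (|deriv (⇑g) t * (m₀ + 1) * (g t) ^ m₀| + (g t) ^ (m₀ + 1))
            * Real.exp t := by gcongr; exact le_abs_self _
        _ ≤ (C * (g t) ^ m₀) * Real.exp t := by gcongr; exact hkey t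
        _ = C * f t := by rw [hf]; simp only [habs]; ring
    have hle : ∫ t in (0:ℝ)..x, C * f t ≤ C * I := by
      rw [intervalIntegral.integral_const_mul]
      have : ∫ t in (0:ℝ)..x, f t ≤ I := by
        rw [intervalIntegral.integral_of_le hx]
        exact hIocI _ measurableSet_Ioc
      exact mul_le_mul_of_nonneg_left this hC0
    have : h x ≤ h 0 + C * I := by
      have := hFTC ▸ (le_trans hmono hle)
      linarith
    calc (g x) ^ (m₀ + 1) * Real.exp |x| = h x := by
          rw [hh, abs_of_nonneg hx]
      _ ≤ h 0 + C * I := this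
      _ = (g 0) ^ (m₀ + 1) + C * I := by rw [hh]; simp
  · -- negative side: h t = g t ^ (m₀+1) * exp (-t)
    set h : ℝ → ℝ := fun t => (g t) ^ (m₀ + 1) * Real.exp (-t) with hh
    set h' : ℝ → ℝ := fun t =>
      deriv (⇑g) t * (m₀ + 1) * (g t) ^ m₀ * Real.exp (-t)
        - (g t) ^ (m₀ + 1) * Real.exp (-t) with hh'
    have hxle : x ≤ 0 := hx.le
    have hD : ∀ t ∈ Set.uIcc x 0, HasDerivAt h (h' t) t := by
      intro t _
      have hexp : HasDerivAt (fun t : ℝ => Real.exp (-t)) (-Real.exp (-t)) t := by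
        simpa [Function.comp_def] using (Real.hasDerivAt_exp (-t)).comp t (hasDerivAt_neg t)
      have := (hDgp t).mul hexp
      simpa [hh, hh', Pi.mul_def, mul_comm, sub_eq_add_neg, mul_neg] using this
    have hcont_h' : Continuous h' := by
      apply Continuous.sub
      · exact ((hcont_g'.mul continuous_const).mul hcont_gm).mul
          (Real.continuous_exp.comp continuous_neg)
      · exact (g.continuous.rpow_const fun y => Or.inr (by linarith)).mul
          (Real.continuous_exp.comp continuous_neg)
    have hInt : IntervalIntegrable h' volume x 0 :=
      hcont_h'.intervalIntegrable x 0
    have hFTC : ∫ t in x..(0:ℝ), h' t = h 0 - h x :=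
      intervalIntegral.integral_eq_sub_of_hasDerivAt hD hInt
    have hIntf : IntervalIntegrable (fun t => C * f t) volume x 0 :=
      (hint.const_mul C).intervalIntegrable
    have hmono : ∫ t in x..(0:ℝ), (-h') t ≤ ∫ t in x..(0:ℝ), C * f t := by
      apply intervalIntegral.integral_mono_on hxle hInt.neg hIntf
      intro t ht
      have ht0 : t ≤ 0 := ht.2
      have habs : |t| = -t := abs_of_nonpos ht0
      calc (-h') t = ((g t) ^ (m₀ + 1) - deriv (⇑g) t * (m₀ + 1) * (g t) ^ m₀)
            * Real.exp (-t) := by rw [hh']; simp; ring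
        _ ≤ (|deriv (⇑g) t * (m₀ + 1) * (g t) ^ m₀| + (g t) ^ (m₀ + 1))
            * Real.exp (-t) := by
              gcongr
              have := neg_abs_le (deriv (⇑g) t * (m₀ + 1) * (g t) ^ m₀)
              linarith
        _ ≤ (C * (g t) ^ m₀) * Real.exp (-t) := by gcongr; exact hkey t
        _ = C * f t := by rw [hf]; simp only [habs]; ring
    have hle : ∫ t in x..(0:ℝ), C * f t ≤ C * I := by
      rw [intervalIntegral.integral_const_mul]
      have : ∫ t in x..(0:ℝ), f t ≤ I := by
        rw [intervalIntegral.integral_of_le hxle]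
        exact hIocI _ measurableSet_Ioc
      exact mul_le_mul_of_nonneg_left this hC0
    have hneg : ∫ t in x..(0:ℝ), (-h') t = h x - h 0 := by
      simp only [Pi.neg_apply]
      rw [intervalIntegral.integral_neg, hFTC]; ring
    have : h x ≤ h 0 + C * I := by
      have := hneg ▸ (le_trans hmono hle)
      linarith
    calc (g x) ^ (m₀ + 1) * Real.exp |x| = h x := by
          rw [hh, abs_of_nonpos hxle]
      _ ≤ h 0 + C * I := this
      _ = (g 0) ^ (m₀ + 1) + C * I := by rw [hh]; simp
end

section
/- Let g₁, g₂ : ℝᵈ → ℝ satisfy |gᵢ(x)| ≤ C₁ e^{−δ₀|x|} for i = 1,2 with δ₀, C₁ > 0. Let v₁ ≠ v₂ ∈ ℝᵈ, w₁, w₂ > 0, α₁, α₂ ∈ ℝᵈ with w_k⁻¹ + w_k + |v_k| + |α_k| ≤ C₂. For p₁, p₂ > 0 define G_{i,k}(t,x) = w_k^{−2/(p−1)} gᵢ((x − v_k t − α_k)/w_k). Then there exist constants C, δ₂ > 0 (depending only on δ₀, C₁, C₂, p₁, p₂, p, d, and |v₁ − v₂|) such that for all t ≥ 0: ∫_{ℝᵈ}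 |G_{1,1}(t,x)|^{p₁} |G_{2,2}(t,x)|^{p₂} dx ≤ C e^{−δ₂ t}. -/
open MeasureTheory

private lemma aux_exp_le {b s : ℝ} (hb : 0 < b) (hs : 0 ≤ s) (n : ℕ) :
    Real.exp (-b * s) ≤ (Real.exp b * n.factorial / b ^ n) * (1 + s) ^ (-(n : ℝ)) := by
  have h1 : (0:ℝ) < 1 + s := by linarith
  have key : (b * (1 + s)) ^ n / n.factorial ≤ Real.exp (b * (1 + s)) :=
    Real.pow_div_factorial_le_exp (x := b * (1 + s)) (by positivity) n
  have hfac : (0:ℝ) < (n.factorial : ℝ) := by positivity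
  have h2 : (1 + s) ^ n ≤ Real.exp b * n.factorial / b ^ n * Real.exp (b * s) := by
    rw [mul_pow, mul_add, mul_one, Real.exp_add] at key
    rw [div_le_iff₀ hfac] at key
    rw [div_mul_eq_mul_div, le_div_iff₀ (pow_pos hb n)]
    nlinarith [key]
  have hrw : (1 + s) ^ (-(n : ℝ)) = ((1 + s) ^ n)⁻¹ := by
    rw [Real.rpow_neg h1.le, Real.rpow_natCast]
  rw [hrw, neg_mul, Real.exp_neg, inv_eq_one_div, inv_eq_one_div, mul_one_div, div_le_div_iff₀
    (Real.exp_pos _) (by positivity), one_mul]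
  exact h2

private lemma aux_integrable_exp {d : ℕ} {b : ℝ} (hb : 0 < b) :
    Integrable (fun x : EuclideanSpace ℝ (Fin d) => Real.exp (-b * ‖x‖)) := by
  have hnr : (Module.finrank ℝ (EuclideanSpace ℝ (Fin d)) : ℝ) < ((d + 1 : ℕ) : ℝ) := by
    rw [finrank_euclideanSpace_fin]
    exact_mod_cast Nat.lt_succ_self d
  refine ((integrable_one_add_norm hnr).const_mul
    (Real.exp b * (d + 1).factorial / b ^ (d + 1))).mono' ?_ (Filter.Eventually.of_forall
    fun x => ?_)
  · exact (Real.continuous_exp.comp (continuous_const.mul continuous_norm)).aestronglyMeasurable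
  · rw [Real.norm_eq_abs, abs_of_pos (Real.exp_pos _)]
    exact aux_exp_le hb (norm_nonneg x) (d + 1)

private lemma aux_factor_bound {d : ℕ} {p C₁ C₂ δ₀ q w : ℝ} (hp : 1 < p) (hq : 0 < q)
    (hC₁ : 0 < C₁) (hC₂ : 0 < C₂) (hδ₀ : 0 < δ₀) (hw : 0 < w) (hwi : w⁻¹ ≤ C₂) (hwle : w ≤ C₂)
    {g : EuclideanSpace ℝ (Fin d) → ℝ} (hg : ∀ x, |g x| ≤ C₁ * Real.exp (-δ₀ * ‖x‖))
    (z : EuclideanSpace ℝ (Fin d)) :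
    |w ^ (-(2:ℝ) / (p - 1)) * g (w⁻¹ • z)| ^ q ≤
      (C₂ ^ ((2:ℝ) / (p - 1)) * C₁) ^ q * Real.exp (-(δ₀ * q / C₂) * ‖z‖) := by
  have hp1 : (0:ℝ) < p - 1 := by linarith
  have he : (0:ℝ) ≤ 2 / (p - 1) := by positivity
  have hA : (0:ℝ) < w ^ (-(2:ℝ) / (p - 1)) := Real.rpow_pos_of_pos hw _
  have hAle : w ^ (-(2:ℝ) / (p - 1)) ≤ C₂ ^ ((2:ℝ) / (p - 1)) := by
    rw [neg_div, Real.rpow_neg hw.le, ← Real.inv_rpow hw.le]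
    exact Real.rpow_le_rpow (by positivity) hwi he
  have hnorm : ‖w⁻¹ • z‖ = w⁻¹ * ‖z‖ := by
    rw [norm_smul, Real.norm_eq_abs, abs_of_pos (by positivity)]
  have hinv : C₂⁻¹ ≤ w⁻¹ := inv_anti₀ hw hwle
  have hgb : |g (w⁻¹ • z)| ≤ C₁ * Real.exp (-(δ₀ / C₂) * ‖z‖) := by
    refine (hg _).trans ?_
    have : -δ₀ * ‖w⁻¹ • z‖ ≤ -(δ₀ / C₂) * ‖z‖ := by
      rw [hnorm]
      have h1 : δ₀ / C₂ * ‖z‖ ≤ δ₀ * (w⁻¹ * ‖z‖) := by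
        calc δ₀ / C₂ * ‖z‖ = δ₀ * C₂⁻¹ * ‖z‖ := by rw [div_eq_mul_inv]
          _ ≤ δ₀ * w⁻¹ * ‖z‖ := by gcongr
          _ = δ₀ * (w⁻¹ * ‖z‖) := by ring
      linarith
    exact mul_le_mul_of_nonneg_left (Real.exp_le_exp.2 this) hC₁.le
  have hbase : |w ^ (-(2:ℝ) / (p - 1)) * g (w⁻¹ • z)| ≤
      C₂ ^ ((2:ℝ) / (p - 1)) * C₁ * Real.exp (-(δ₀ / C₂) * ‖z‖) := by
    rw [abs_mul, abs_of_pos hA]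
    calc w ^ (-(2:ℝ) / (p - 1)) * |g (w⁻¹ • z)| ≤
        C₂ ^ ((2:ℝ) / (p - 1)) * (C₁ * Real.exp (-(δ₀ / C₂) * ‖z‖)) := by
          exact mul_le_mul hAle hgb (abs_nonneg _) (by positivity)
      _ = C₂ ^ ((2:ℝ) / (p - 1)) * C₁ * Real.exp (-(δ₀ / C₂) * ‖z‖) := by ring
  calc |w ^ (-(2:ℝ) / (p - 1)) * g (w⁻¹ • z)| ^ q ≤
      (C₂ ^ ((2:ℝ) / (p - 1)) * C₁ * Real.exp (-(δ₀ / C₂) * ‖z‖)) ^ q :=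
        Real.rpow_le_rpow (abs_nonneg _) hbase hq.le
    _ = (C₂ ^ ((2:ℝ) / (p - 1)) * C₁) ^ q * Real.exp (-(δ₀ / C₂) * ‖z‖) ^ q :=
        Real.mul_rpow (by positivity) (Real.exp_pos _).le
    _ = (C₂ ^ ((2:ℝ) / (p - 1)) * C₁) ^ q * Real.exp (-(δ₀ * q / C₂) * ‖z‖) := by
        rw [← Real.exp_mul]
        ring_nf

set_option maxHeartbeats 1000000 in
/-- Decoupling lemma: for exponentially decaying profiles `g₁, g₂` travelling with distinct
velocities `v₁ ≠ v₂`, the product of the rescaled moving profiles decays exponentially in time: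
`∫ |G_{1,1}(t)|^{p₁} |G_{2,2}(t)|^{p₂} dx ≤ C e^{−δ₂ t}`. -/
theorem stmt5 (d : ℕ) (hd : 1 ≤ d) (p p₁ p₂ C₁ C₂ δ₀ : ℝ)
    (hp : 1 < p) (hp₁ : 0 < p₁) (hp₂ : 0 < p₂) (hC₁ : 0 < C₁) (hC₂ : 0 < C₂) (hδ₀ : 0 < δ₀)
    (g₁ g₂ : EuclideanSpace ℝ (Fin d) → ℝ)
    (hg₁ : ∀ x, |g₁ x| ≤ C₁ * Real.exp (-δ₀ * ‖x‖))
    (hg₂ : ∀ x, |g₂ x| ≤ C₁ * Real.exp (-δ₀ * ‖x‖))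
    (v₁ v₂ : EuclideanSpace ℝ (Fin d)) (hv : v₁ ≠ v₂)
    (w₁ w₂ : ℝ) (hw₁ : 0 < w₁) (hw₂ : 0 < w₂)
    (α₁ α₂ : EuclideanSpace ℝ (Fin d))
    (hb₁ : w₁⁻¹ + w₁ + ‖v₁‖ + ‖α₁‖ ≤ C₂) (hb₂ : w₂⁻¹ + w₂ + ‖v₂‖ + ‖α₂‖ ≤ C₂) :
    ∃ C > (0:ℝ), ∃ δ₂ > (0:ℝ), ∀ t : ℝ, 0 ≤ t →
      (∫ x, |w₁ ^ (-(2:ℝ) / (p - 1)) * g₁ ((w₁)⁻¹ • (x - t • v₁ - α₁))| ^ p₁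
          * |w₂ ^ (-(2:ℝ) / (p - 1)) * g₂ ((w₂)⁻¹ • (x - t • v₂ - α₂))| ^ p₂)
        ≤ C * Real.exp (-δ₂ * t) := by
  -- basic bounds from hb₁, hb₂
  have hw1i : w₁⁻¹ ≤ C₂ := by have := norm_nonneg v₁; have := norm_nonneg α₁; linarith
  have hw1le : w₁ ≤ C₂ := by
    have := norm_nonneg v₁; have := norm_nonneg α₁
    have : (0:ℝ) < w₁⁻¹ := by positivity
    linarith
  have hw2i : w₂⁻¹ ≤ C₂ := by have := norm_nonneg v₂; have := norm_nonneg α₂; linarith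
  have hw2le : w₂ ≤ C₂ := by
    have := norm_nonneg v₂; have := norm_nonneg α₂
    have : (0:ℝ) < w₂⁻¹ := by positivity
    linarith
  have hα₁ : ‖α₁‖ ≤ C₂ := by
    have : (0:ℝ) < w₁⁻¹ := by positivity
    have := norm_nonneg v₁; linarith
  have hα₂ : ‖α₂‖ ≤ C₂ := by
    have : (0:ℝ) < w₂⁻¹ := by positivity
    have := norm_nonneg v₂; linarith
  obtain ⟨c, hc_def⟩ : ∃ c : ℝ, c = δ₀ * min p₁ p₂ / C₂ := ⟨_, rfl⟩
  have hc : 0 < c := by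
    have : 0 < min p₁ p₂ := lt_min hp₁ hp₂
    rw [hc_def]; positivity
  have hvpos : 0 < ‖v₁ - v₂‖ := by
    rw [norm_pos_iff, sub_ne_zero]; exact hv
  obtain ⟨δ₂, hδ₂_def⟩ : ∃ δ₂ : ℝ, δ₂ = c / 2 * ‖v₁ - v₂‖ := ⟨_, rfl⟩
  have hδ₂ : 0 < δ₂ := by rw [hδ₂_def]; positivity
  obtain ⟨K, hK_def⟩ : ∃ K : ℝ,
      K = (C₂ ^ ((2:ℝ) / (p - 1)) * C₁) ^ p₁ * (C₂ ^ ((2:ℝ) / (p - 1)) * C₁) ^ p₂ := ⟨_, rfl⟩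
  have hK : 0 < K := by
    have h1 : (0:ℝ) < C₂ ^ ((2:ℝ) / (p - 1)) * C₁ :=
      mul_pos (Real.rpow_pos_of_pos hC₂ _) hC₁
    rw [hK_def]
    exact mul_pos (Real.rpow_pos_of_pos h1 _) (Real.rpow_pos_of_pos h1 _)
  obtain ⟨I, hI_def⟩ : ∃ I : ℝ, I = ∫ x : EuclideanSpace ℝ (Fin d), Real.exp (-(c / 2) * ‖x‖) :=
    ⟨_, rfl⟩
  have hI : 0 ≤ I := hI_def ▸ integral_nonneg fun x => (Real.exp_pos _).le
  refine ⟨K * Real.exp (c * C₂) * (I + 1),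
    mul_pos (mul_pos hK (Real.exp_pos _)) (by linarith), δ₂, hδ₂, fun t ht => ?_⟩
  set a : EuclideanSpace ℝ (Fin d) := t • v₁ + α₁ with ha_def
  -- pointwise bound
  have hpt : ∀ x : EuclideanSpace ℝ (Fin d),
      |w₁ ^ (-(2:ℝ) / (p - 1)) * g₁ ((w₁)⁻¹ • (x - t • v₁ - α₁))| ^ p₁
        * |w₂ ^ (-(2:ℝ) / (p - 1)) * g₂ ((w₂)⁻¹ • (x - t • v₂ - α₂))| ^ p₂
      ≤ K * Real.exp (c * C₂) * Real.exp (-δ₂ * t) * Real.exp (-(c / 2) * ‖x - a‖) := by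
    intro x
    set z₁ := x - t • v₁ - α₁ with hz₁
    set z₂ := x - t • v₂ - α₂ with hz₂
    have h1 := aux_factor_bound hp hp₁ hC₁ hC₂ hδ₀ hw₁ hw1i hw1le hg₁ z₁
    have h2 := aux_factor_bound hp hp₂ hC₁ hC₂ hδ₀ hw₂ hw2i hw2le hg₂ z₂
    have hmul : |w₁ ^ (-(2:ℝ) / (p - 1)) * g₁ ((w₁)⁻¹ • z₁)| ^ p₁
        * |w₂ ^ (-(2:ℝ) / (p - 1)) * g₂ ((w₂)⁻¹ • z₂)| ^ p₂
        ≤ K * (Real.exp (-(δ₀ * p₁ / C₂) * ‖z₁‖) * Real.exp (-(δ₀ * p₂ / C₂) * ‖z₂‖)) := by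
      calc |w₁ ^ (-(2:ℝ) / (p - 1)) * g₁ ((w₁)⁻¹ • z₁)| ^ p₁
          * |w₂ ^ (-(2:ℝ) / (p - 1)) * g₂ ((w₂)⁻¹ • z₂)| ^ p₂
          ≤ ((C₂ ^ ((2:ℝ) / (p - 1)) * C₁) ^ p₁ * Real.exp (-(δ₀ * p₁ / C₂) * ‖z₁‖))
            * ((C₂ ^ ((2:ℝ) / (p - 1)) * C₁) ^ p₂ * Real.exp (-(δ₀ * p₂ / C₂) * ‖z₂‖)) := by
            exact mul_le_mul h1 h2 (Real.rpow_nonneg (abs_nonneg _) _) (by positivity)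
        _ = K * (Real.exp (-(δ₀ * p₁ / C₂) * ‖z₁‖) * Real.exp (-(δ₀ * p₂ / C₂) * ‖z₂‖)) := by
            rw [hK_def]; ring
    refine hmul.trans ?_
    have hexp : Real.exp (-(δ₀ * p₁ / C₂) * ‖z₁‖) * Real.exp (-(δ₀ * p₂ / C₂) * ‖z₂‖)
        ≤ Real.exp (c * C₂) * (Real.exp (-δ₂ * t) * Real.exp (-(c / 2) * ‖x - a‖)) := by
      rw [← Real.exp_add, ← Real.exp_add, ← Real.exp_add, Real.exp_le_exp]
      have hcmin1 : c ≤ δ₀ * p₁ / C₂ := by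
        rw [hc_def]
        gcongr δ₀ * ?_ / C₂
        exact min_le_left _ _
      have hcmin2 : c ≤ δ₀ * p₂ / C₂ := by
        rw [hc_def]
        gcongr δ₀ * ?_ / C₂
        exact min_le_right _ _
      have hz12 : ‖z₁‖ + ‖z₂‖ ≥ t * ‖v₁ - v₂‖ - 2 * C₂ := by
        have hd1 : ‖z₁ - z₂‖ ≤ ‖z₁‖ + ‖z₂‖ := norm_sub_le _ _
        have hz : z₁ - z₂ = t • (v₂ - v₁) + (α₂ - α₁) := by
          rw [hz₁, hz₂, smul_sub]; abel
        have hd2 : t * ‖v₁ - v₂‖ - ‖α₂ - α₁‖ ≤ ‖z₁ - z₂‖ := by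
          rw [hz]
          have h3 : ‖t • (v₂ - v₁)‖ - ‖α₂ - α₁‖ ≤ ‖t • (v₂ - v₁) + (α₂ - α₁)‖ := by
            have h3' : ‖t • (v₂ - v₁)‖ ≤ ‖t • (v₂ - v₁) + (α₂ - α₁)‖ + ‖α₂ - α₁‖ := by
              have := norm_sub_le (t • (v₂ - v₁) + (α₂ - α₁)) (α₂ - α₁)
              simpa using this
            linarith
          have h4 : ‖t • (v₂ - v₁)‖ = t * ‖v₁ - v₂‖ := by
            rw [norm_smul, Real.norm_eq_abs, abs_of_nonneg ht, norm_sub_rev]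
          linarith
        have hαd : ‖α₂ - α₁‖ ≤ 2 * C₂ := (norm_sub_le _ _).trans (by linarith)
        linarith
      have hza : ‖x - a‖ = ‖z₁‖ := by rw [ha_def, hz₁, sub_sub]
      rw [hza]
      have h1nn : (0:ℝ) ≤ ‖z₁‖ := norm_nonneg _
      have h2nn : (0:ℝ) ≤ ‖z₂‖ := norm_nonneg _
      generalize ‖z₁‖ = n1 at hz12 h1nn ⊢
      generalize ‖z₂‖ = n2 at hz12 h2nn ⊢
      generalize hV : ‖v₁ - v₂‖ = V at hz12 hδ₂_def
      have e1 : -(δ₀ * p₁ / C₂) * n1 + -(δ₀ * p₂ / C₂) * n2 ≤ -c * n1 + -c * n2 := by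
        nlinarith [mul_le_mul_of_nonneg_right hcmin1 h1nn,
          mul_le_mul_of_nonneg_right hcmin2 h2nn]
      have e2 : -c * n1 + -c * n2 ≤ c * C₂ + (-δ₂ * t + -(c / 2) * n1) := by
        have h5 : c / 2 * (t * V - 2 * C₂) ≤ c / 2 * (n1 + n2) :=
          mul_le_mul_of_nonneg_left hz12 (by positivity)
        rw [hδ₂_def]
        nlinarith [h5, mul_nonneg hc.le h2nn]
      linarith
    calc K * (Real.exp (-(δ₀ * p₁ / C₂) * ‖z₁‖) * Real.exp (-(δ₀ * p₂ / C₂) * ‖z₂‖))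
        ≤ K * (Real.exp (c * C₂) * (Real.exp (-δ₂ * t) * Real.exp (-(c / 2) * ‖x - a‖))) :=
          mul_le_mul_of_nonneg_left hexp hK.le
      _ = K * Real.exp (c * C₂) * Real.exp (-δ₂ * t) * Real.exp (-(c / 2) * ‖x - a‖) := by ring
  -- integrability of the majorant
  have hint0 : Integrable (fun x : EuclideanSpace ℝ (Fin d) => Real.exp (-(c / 2) * ‖x‖)) :=
    aux_integrable_exp (half_pos hc)
  have hint1 : Integrable (fun x : EuclideanSpace ℝ (Fin d) =>
      K * Real.exp (c * C₂) * Real.exp (-δ₂ * t) * Real.exp (-(c / 2) * ‖x - a‖)) :=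
    (hint0.comp_sub_right a).const_mul _
  have hle : (∫ x, |w₁ ^ (-(2:ℝ) / (p - 1)) * g₁ ((w₁)⁻¹ • (x - t • v₁ - α₁))| ^ p₁
      * |w₂ ^ (-(2:ℝ) / (p - 1)) * g₂ ((w₂)⁻¹ • (x - t • v₂ - α₂))| ^ p₂)
      ≤ ∫ x, K * Real.exp (c * C₂) * Real.exp (-δ₂ * t) * Real.exp (-(c / 2) * ‖x - a‖) := by
    refine integral_mono_of_nonneg (Filter.Eventually.of_forall fun x => ?_) hint1
      (Filter.Eventually.of_forall hpt)
    positivity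
  refine hle.trans ?_
  have hval : (∫ x, K * Real.exp (c * C₂) * Real.exp (-δ₂ * t)
      * Real.exp (-(c / 2) * ‖x - a‖))
      = K * Real.exp (c * C₂) * Real.exp (-δ₂ * t) * I := by
    rw [integral_const_mul, hI_def,
      integral_sub_right_eq_self (fun x : EuclideanSpace ℝ (Fin d) =>
        Real.exp (-(c / 2) * ‖x‖)) a]
  rw [hval]
  have h6 : I ≤ I + 1 := by linarith
  calc K * Real.exp (c * C₂) * Real.exp (-δ₂ * t) * I
      = K * Real.exp (c * C₂) * I * Real.exp (-δ₂ * t) := by ring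
    _ ≤ K * Real.exp (c * C₂) * (I + 1) * Real.exp (-δ₂ * t) :=
        mul_le_mul_of_nonneg_right
          (mul_le_mul_of_nonneg_left h6 (mul_pos hK (Real.exp_pos _)).le) (Real.exp_pos _).le
end
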